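/- Let D = (P, B) be a symmetric 2-(v,k,λ) design (i.e., the number of blocks equals the number of points) with k ≥ λ + 2 (this excludes, in particular, the triangle, the 2-(3,2,1) design). Then the canonical map P → 𝔊_D, X ↦ X + R, is injective; that is, D is embeddable in the group 𝔊_D. -/

import Mathlib

open Finset Matrix

noncomputable def coeffHom {α : Type*} [DecidableEq α] (p : α) : FreeAbelianGroup α →+ ℤ :=
  FreeAbelianGroup.lift (fun q => if q = p then 1 else 0)

lemma coeffHom_of {α : Type*} [DecidableEq α] (p q : α) :
    coeffHom p (FreeAbelianGroup.of q) = if q = p then 1 else 0 :=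
  FreeAbelianGroup.lift_apply_of _ _

lemma coeffHom_chi {α : Type*} [DecidableEq α] (p : α) (b : Finset α) :
    coeffHom p (∑ q ∈ b, FreeAbelianGroup.of q) = if p ∈ b then 1 else 0 := by
  rw [map_sum]
  simp only [coeffHom_of]
  simp [Finset.sum_ite_eq b p (fun _ => (1:ℤ))]

/-- A symmetric 2-(v,k,λ) design (number of blocks = number of points)
with k ≥ λ + 2 is embeddable in 𝔊_D: the canonical map P → 𝔊_D is injective. -/
theorem stmt_4 {α : Type*} [Fintype α] [DecidableEq α]
    (B : Finset (Finset α)) (v k lam : ℕ)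
    (hv : Fintype.card α = v)
    (hsym : B.card = v)
    (hk : ∀ b ∈ B, b.card = k)
    (hlam : ∀ x y : α, x ≠ y → (B.filter (fun b => x ∈ b ∧ y ∈ b)).card = lam)
    (hkl : lam + 2 ≤ k)
    (R : AddSubgroup (FreeAbelianGroup α))
    (hR : R = AddSubgroup.closure {g | ∃ b ∈ B, g = ∑ p ∈ b, FreeAbelianGroup.of p}) :
    Function.Injective (fun X : α =>
      (QuotientAddGroup.mk (FreeAbelianGroup.of X) : FreeAbelianGroup α ⧸ R)) := by
  intro X Y hq
  classical
  by_contra hne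
  simp only [QuotientAddGroup.eq] at hq
  rw [hR] at hq
  set χ : Finset α → FreeAbelianGroup α := fun b => ∑ p ∈ b, FreeAbelianGroup.of p with hχ
  have hχinj : Function.Injective χ := by
    intro b b' h
    ext p
    have := congrArg (coeffHom p) h
    rw [coeffHom_chi, coeffHom_chi] at this
    by_cases hb : p ∈ b <;> by_cases hb' : p ∈ b' <;> simp_all
  have hset : {g | ∃ b ∈ B, g = χ b} = ↑(B.image χ) := by
    ext g; simp [eq_comm]
  rw [hset, ← Submodule.span_int_eq_addSubgroupClosure] at hq
  obtain ⟨f, -, hf⟩ := Submodule.mem_span_finset.mp hq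
  rw [Finset.sum_image (fun b _ b' _ h => hχinj h)] at hf
  set c : Finset α → ℤ := fun b => f (χ b) with hc
  -- key coefficient equations
  have E : ∀ p : α, ∑ b ∈ B, (if p ∈ b then c b else 0)
      = -(if X = p then 1 else 0) + (if Y = p then 1 else 0) := by
    intro p
    have := congrArg (coeffHom p) hf
    rw [map_sum, map_add, map_neg, coeffHom_of, coeffHom_of] at this
    rw [← this]
    refine Finset.sum_congr rfl fun b _ => ?_
    rw [map_zsmul, coeffHom_chi]
    by_cases hp : p ∈ b <;> simp [hp, hc]
  have hv0 : 0 < v := by rw [← hv]; exact Fintype.card_pos_iff.mpr ⟨X⟩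
  have hk2 : 2 ≤ k := le_trans (Nat.le_add_left 2 lam) hkl
  have hr : ∀ p : α, (B.filter fun b => p ∈ b).card = k := by
    have hv0 : 0 < v := by rw [← hv]; exact Fintype.card_pos_iff.mpr ⟨X⟩
    have hk2 : 2 ≤ k := le_trans (Nat.le_add_left 2 lam) hkl
    have G1 : ∀ p : α, (B.filter fun b => p ∈ b).card * (k-1) = (v-1) * lam := by
      intro p
      have swap : ∑ b ∈ B, ∑ q ∈ univ.erase p, (if p ∈ b ∧ q ∈ b then 1 else 0)
            = ∑ q ∈ univ.erase p, ∑ b ∈ B, (if p ∈ b ∧ q ∈ b then 1 else 0) :=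
        Finset.sum_comm
      have lhs : ∀ b ∈ B, ∑ q ∈ univ.erase p, (if p ∈ b ∧ q ∈ b then 1 else 0)
          = if p ∈ b then k - 1 else 0 := by
        intro b hb
        by_cases hp : p ∈ b
        · simp only [hp, true_and, if_true]
          rw [← Finset.card_filter]
          have hfe : (univ.erase p).filter (fun q => q ∈ b) = b.erase p := by
            ext q; simp [Finset.mem_erase, and_comm]
          rw [hfe, Finset.card_erase_of_mem hp, hk b hb]
        · simp [hp]
      have rhs : ∀ q ∈ univ.erase p, ∑ b ∈ B, (if p ∈ b ∧ q ∈ b then 1 else 0) = lam := by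
        intro q hq
        rw [← Finset.card_filter]
        exact hlam p q (Ne.symm (Finset.mem_erase.mp hq).1)
      rw [Finset.sum_congr rfl lhs, Finset.sum_congr rfl rhs, Finset.sum_const,
        Finset.card_erase_of_mem (Finset.mem_univ p), card_univ, hv, smul_eq_mul,
        ← Finset.sum_filter] at swap
      rw [Finset.sum_const, smul_eq_mul] at swap
      exact swap
    have G2 : ∑ p : α, (B.filter fun b => p ∈ b).card = v * k := by
      have swap : ∑ p : α, ∑ b ∈ B, (if p ∈ b then 1 else 0)
          = ∑ b ∈ B, ∑ p : α, (if p ∈ b then 1 else 0) := Finset.sum_comm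
      have rhs : ∀ b ∈ B, ∑ p : α, (if p ∈ b then 1 else 0) = k := by
        intro b hb
        rw [← Finset.card_filter]
        rw [Finset.filter_univ_mem, hk b hb]
      rw [Finset.sum_congr rfl rhs, Finset.sum_const, smul_eq_mul, hsym] at swap
      calc ∑ p : α, (B.filter fun b => p ∈ b).card
          = ∑ p : α, ∑ b ∈ B, (if p ∈ b then 1 else 0) := by
            refine Finset.sum_congr rfl fun p _ => ?_; rw [← Finset.card_filter]
        _ = v * k := swap
    have hconst : ∀ p q : α, (B.filter fun b => p ∈ b).card = (B.filter fun b => q ∈ b).card := by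
      intro p q
      exact Nat.eq_of_mul_eq_mul_right (by omega) ((G1 p).trans (G1 q).symm)
    intro p
    have hvp : ∑ q : α, (B.filter fun b => q ∈ b).card = v * (B.filter fun b => p ∈ b).card := by
      rw [Finset.sum_congr rfl (fun q _ => hconst q p), Finset.sum_const, card_univ, hv, smul_eq_mul]
    exact (Nat.eq_of_mul_eq_mul_left hv0 (hvp.symm.trans G2))
  set β := {x // x ∈ B}
  have hcardβ : Fintype.card β = v := by rw [Fintype.card_coe, hsym]
  have e : β ≃ α := Fintype.equivOfCardEq (by rw [hcardβ, hv])
  set a : ℚ := (k : ℚ) - lam with ha_def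
  have ha2 : (2:ℚ) ≤ a := by
    have : (lam:ℚ) + 2 ≤ k := by exact_mod_cast hkl
    linarith
  have ha0 : a ≠ 0 := by linarith
  set t : ℚ := a + lam * v with ht_def
  have ht0 : t ≠ 0 := by
    have h1 : (0:ℚ) ≤ (lam:ℚ) * v := by positivity
    intro h; rw [ht_def] at h; linarith
  set N : Matrix β α ℚ := Matrix.of (fun b p => if p ∈ (b : Finset α) then 1 else 0) with hN
  set Jα : Matrix α α ℚ := Matrix.of (fun _ _ => 1) with hJα
  set Jβ : Matrix β β ℚ := Matrix.of (fun _ _ => 1) with hJβ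
  -- F1
  have F1 : Nᵀ * N = a • 1 + (lam:ℚ) • Jα := by
    ext p q
    have e1 : ∀ b : β, N b p * N b q
        = if p ∈ (b:Finset α) ∧ q ∈ (b:Finset α) then (1:ℚ) else 0 := by
      intro b
      by_cases h1 : p ∈ (b:Finset α) <;> by_cases h2 : q ∈ (b:Finset α) <;> simp [hN, h1, h2]
    rw [Matrix.mul_apply]
    simp only [Matrix.transpose_apply, e1]
    rw [Finset.sum_coe_sort B (fun b => if p ∈ b ∧ q ∈ b then (1:ℚ) else 0),
      Finset.sum_boole]
    by_cases hpq : p = q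
    · subst hpq
      have : B.filter (fun b => p ∈ b ∧ p ∈ b) = B.filter (fun b => p ∈ b) := by
        simp
      rw [this, hr p]
      simp [Matrix.one_apply, hJα, ha_def]
    · rw [hlam p q hpq]
      simp [Matrix.one_apply, hpq, hJα]
  -- F2
  have F2 : N * Jα = Jβ * N := by
    ext b q
    rw [Matrix.mul_apply, Matrix.mul_apply]
    have l1 : ∑ p : α, N b p * Jα p q = ((b : Finset α).card : ℚ) := by
      simp only [hN, hJα, Matrix.of_apply, mul_one]
      rw [Finset.sum_boole]
      congr 1
      rw [Finset.filter_univ_mem]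
    have l2 : ∑ b' : β, Jβ b b' * N b' q = ((B.filter fun x => q ∈ x).card : ℚ) := by
      simp only [hN, hJβ, Matrix.of_apply, one_mul]
      rw [Finset.sum_coe_sort B (fun x => if q ∈ x then (1:ℚ) else 0), Finset.sum_boole]
    rw [l1, l2, hk b.1 b.2, hr q]
  -- JJ
  have JJ : Jα * Jα = (v:ℚ) • Jα := by
    ext p q
    rw [Matrix.mul_apply]
    simp [hJα, Finset.card_univ, hv]
  have prodJ : ∀ s u s' u' : ℚ, (s•(1:Matrix α α ℚ) + u•Jα) * (s'•1 + u'•Jα)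
      = (s*s')•1 + (s*u' + u*s' + u*u'*v)•Jα := by
    intro s u s' u'
    simp only [Matrix.add_mul, Matrix.mul_add, Matrix.smul_mul, Matrix.mul_smul,
      Matrix.one_mul, Matrix.mul_one, JJ, smul_smul]
    module
  set B₀ : Matrix α α ℚ := a⁻¹ • 1 + (-(lam / (a*t))) • Jα with hB₀
  have hcoef : a * (-(↑lam / (a * t))) + ↑lam * a⁻¹ + ↑lam * (-(↑lam / (a * t))) * ↑v = 0 := by
    rw [ht_def]
    field_simp
    ring
  have hAB : (a • (1:Matrix α α ℚ) + (lam:ℚ) • Jα) * B₀ = 1 := by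
    rw [hB₀, prodJ, mul_inv_cancel₀ ha0, hcoef]
    simp
  have hBA : B₀ * (a • (1:Matrix α α ℚ) + (lam:ℚ) • Jα) = 1 := by
    rw [hB₀, prodJ, inv_mul_cancel₀ ha0]
    rw [show a⁻¹ * ↑lam + -(↑lam / (a * t)) * a + -(↑lam / (a * t)) * ↑lam * ↑v = 0 by
      rw [ht_def]; field_simp; ring]
    simp
  set L : Matrix α β ℚ := B₀ * Nᵀ with hL
  have hLN : L * N = 1 := by rw [hL, Matrix.mul_assoc, F1, hBA]
  have hNL : N * L = 1 := (Matrix.mul_eq_one_comm_of_equiv e).mpr hLN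
  have F5 : N * Nᵀ = a • 1 + (lam:ℚ) • Jβ := by
    calc N * Nᵀ = (N * Nᵀ) * (N * L) := by rw [hNL, Matrix.mul_one]
      _ = (N * (Nᵀ * N)) * L := by simp only [Matrix.mul_assoc]
      _ = (N * (a • 1 + (lam:ℚ) • Jα)) * L := by rw [F1]
      _ = a • (N * L) + (lam:ℚ) • ((N * Jα) * L) := by
          rw [Matrix.mul_add, Matrix.add_mul, Matrix.mul_smul, Matrix.smul_mul,
            Matrix.mul_one, Matrix.mul_smul, Matrix.smul_mul]
      _ = a • 1 + (lam:ℚ) • Jβ := by rw [F2, Matrix.mul_assoc, hNL, Matrix.mul_one]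
  -- vectors
  set cQ : β → ℚ := fun b => ((c b.1 : ℤ) : ℚ) with hcQ
  set uvec : α → ℚ := fun p => -(if X = p then 1 else 0) + (if Y = p then 1 else 0) with hu_def
  set qv : β → ℚ := fun b => -(if X ∈ (b:Finset α) then 1 else 0)
      + (if Y ∈ (b:Finset α) then 1 else 0) with hqv
  have hu : Nᵀ.mulVec cQ = uvec := by
    ext p
    rw [Matrix.mulVec, dotProduct]
    have e2 : ∀ b : β, Nᵀ p b * cQ b = if p ∈ (b:Finset α) then ((c b.1 : ℤ):ℚ) else 0 := by
      intro b
      by_cases h1 : p ∈ (b:Finset α) <;> simp [hN, hcQ, h1]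
    simp only [e2]
    rw [Finset.sum_coe_sort B (fun b => if p ∈ b then ((c b : ℤ):ℚ) else 0)]
    have := congrArg (fun z : ℤ => (z : ℚ)) (E p)
    push_cast at this
    rw [hu_def]
    simpa using this
  have hq2 : N.mulVec uvec = qv := by
    ext b
    rw [Matrix.mulVec, dotProduct]
    have e3 : ∀ p : α, N b p * uvec p = if p ∈ (b:Finset α) then uvec p else 0 := by
      intro p; by_cases h1 : p ∈ (b:Finset α) <;> simp [hN, h1]
    simp only [e3]
    rw [Finset.sum_ite_mem, Finset.univ_inter]
    rw [hu_def, hqv]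
    simp only [Finset.sum_add_distrib, Finset.sum_neg_distrib]
    rw [Finset.sum_ite_eq (b:Finset α) X (fun _ => (1:ℚ)),
      Finset.sum_ite_eq (b:Finset α) Y (fun _ => (1:ℚ))]
  have key : (a • (1:Matrix β β ℚ) + (lam:ℚ) • Jβ).mulVec cQ = qv := by
    rw [← F5, ← Matrix.mulVec_mulVec, hu, hq2]
  set S : ℚ := ∑ b : β, cQ b with hS
  have comp : ∀ b : β, a * cQ b + (lam:ℚ) * S = qv b := by
    intro b
    have := congrFun key b
    rw [Matrix.add_mulVec, Matrix.smul_mulVec, Matrix.smul_mulVec,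
      Matrix.one_mulVec] at this
    have hJv : Jβ.mulVec cQ b = S := by
      rw [Matrix.mulVec, dotProduct]
      simp [hJβ, hS]
    simp only [Pi.add_apply, Pi.smul_apply, hJv, smul_eq_mul] at this
    exact this
  have hsumq : ∑ b : β, qv b = 0 := by
    rw [hqv]
    simp only [Finset.sum_add_distrib, Finset.sum_neg_distrib]
    rw [Finset.sum_coe_sort B (fun x => if X ∈ x then (1:ℚ) else 0),
      Finset.sum_coe_sort B (fun x => if Y ∈ x then (1:ℚ) else 0),
      Finset.sum_boole, Finset.sum_boole, hr X, hr Y]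
    ring
  have hsuml : ∑ b : β, (a * cQ b + (lam:ℚ) * S) = t * S := by
    rw [Finset.sum_add_distrib, ← Finset.mul_sum, ← hS, Finset.sum_const,
      Finset.card_univ, hcardβ, nsmul_eq_mul, ht_def]
    ring
  have hS0 : S = 0 := by
    have : t * S = 0 := by
      rw [← hsuml, Finset.sum_congr rfl (fun b _ => comp b), hsumq]
    exact (mul_eq_zero.mp this).resolve_left ht0
  have czero : ∀ b : β, c b.1 = 0 := by
    intro b
    by_contra hc
    have h1 : (1:ℚ) ≤ |cQ b| := by
      rw [hcQ]
      simp only []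
      rw [← Int.cast_abs]
      exact_mod_cast Int.one_le_abs hc
    have h2 : |qv b| ≤ 1 := by
      rw [hqv]
      simp only []
      split_ifs <;> norm_num
    have h3 : a * cQ b = qv b := by
      have := comp b; rw [hS0] at this; simpa using this
    have h4 : (2:ℚ) ≤ |a * cQ b| := by
      rw [abs_mul, abs_of_pos (by linarith : (0:ℚ) < a)]
      calc (2:ℚ) = 2 * 1 := by ring
        _ ≤ a * |cQ b| := by
            apply mul_le_mul ha2 h1 (by norm_num) (by linarith)
    rw [h3] at h4
    linarith
  have final := E Y
  rw [Finset.sum_eq_zero (fun b hb => by rw [czero ⟨b, hb⟩]; simp)] at final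
  simp [hne] at final
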